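/- In a real Hilbert space with p = 2, the Moreau–Yosida regularization f_ε of a proper convex lower semicontinuous function f is Fréchet differentiable with ∇f_ε(x) = (x - prox_{εf}(x))/ε, and ∇f_ε is Lipschitz continuous with constant 1/ε. -/

import Mathlib

/-- In a real Hilbert space with `p = 2`, the Moreau–Yosida regularization `f_ε` of a proper
convex lsc function `f` is (Fréchet) differentiable with gradient
`∇f_ε(x) = (x - prox_{εf}(x))/ε`, and the gradient is Lipschitz with constant `1/ε`. -/
theorem MY_gradient_hilbert {H : Type*} [NormedAddCommGroup H] [InnerProductSpace ℝ H]
    [CompleteSpace H]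
    (f : H → EReal) (hproper : ∃ z, f z ≠ ⊤) (hnobot : ∀ z, f z ≠ ⊥)
    (hconv : ∀ x y : H, ∀ a b : ℝ, 0 < a → 0 < b → a + b = 1 →
      f (a • x + b • y) ≤ (a : EReal) * f x + (b : EReal) * f y)
    (hlsc : LowerSemicontinuous f)
    (ε : ℝ) (hε : 0 < ε)
    (feps : H → ℝ) (prox : H → H)
    (hlb : ∀ x y : H, ((feps x : ℝ) : EReal) ≤ f y + ((‖x - y‖ ^ 2 / (2 * ε) : ℝ) : EReal))
    (hprox : ∀ x : H,
      ((feps x : ℝ) : EReal) = f (prox x) + ((‖x - prox x‖ ^ 2 / (2 * ε) : ℝ) : EReal))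
    (huniq : ∀ x y : H,
      ((feps x : ℝ) : EReal) = f y + ((‖x - y‖ ^ 2 / (2 * ε) : ℝ) : EReal) → y = prox x) :
    (∀ x : H, HasGradientAt feps (ε⁻¹ • (x - prox x)) x) ∧
    (∀ x y : H, ‖ε⁻¹ • (x - prox x) - ε⁻¹ • (y - prox y)‖ ≤ ε⁻¹ * ‖x - y‖) := by
  have hε2 : (0:ℝ) < 2 * ε := by linarith
  -- f is real-valued at prox points
  have hfin : ∀ x : H, ∃ r : ℝ, f (prox x) = (r : EReal) ∧
      feps x = r + ‖x - prox x‖ ^ 2 / (2 * ε) := by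
    intro x
    have h := hprox x
    have hne : f (prox x) ≠ ⊤ := by
      intro htop
      rw [htop, EReal.top_add_of_ne_bot (by exact_mod_cast EReal.coe_ne_bot _)] at h
      exact EReal.coe_ne_top _ h
    refine ⟨(f (prox x)).toReal, (EReal.coe_toReal hne (hnobot _)).symm, ?_⟩
    rw [← EReal.coe_toReal hne (hnobot _), ← EReal.coe_add] at h
    exact_mod_cast h
  -- key subgradient inequality
  have key : ∀ x q : H, ∀ rq rp : ℝ, f q = (rq : EReal) →
      f (prox x) = (rp : EReal) → feps x = rp + ‖x - prox x‖ ^ 2 / (2 * ε) →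
      (inner ℝ (x - prox x) (q - prox x) : ℝ) / ε ≤ rq - rp := by
    intro x q rq rp hq hp hfx
    set p := prox x with hpdef
    have step : ∀ t : ℝ, 0 < t → t < 1 →
        (inner ℝ (x - p) (q - p) : ℝ) / ε ≤ rq - rp + t * (‖q - p‖ ^ 2 / (2 * ε)) := by
      intro t ht ht1
      have hconv' := hconv p q (1 - t) t (by linarith) ht (by ring)
      set pt := (1 - t) • p + t • q with hpt
      have hlb' := hlb x pt
      have hcomb : ((feps x : ℝ) : EReal) ≤
          (((1 - t) * rp + t * rq + ‖x - pt‖ ^ 2 / (2 * ε) : ℝ) : EReal) := by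
        calc ((feps x : ℝ) : EReal) ≤ f pt + ((‖x - pt‖ ^ 2 / (2 * ε) : ℝ) : EReal) := hlb'
        _ ≤ ((1 - t : ℝ) : EReal) * f p + ((t : ℝ) : EReal) * f q
              + ((‖x - pt‖ ^ 2 / (2 * ε) : ℝ) : EReal) := add_le_add_left hconv' _
        _ = (((1 - t) * rp + t * rq + ‖x - pt‖ ^ 2 / (2 * ε) : ℝ) : EReal) := by
              rw [hp, hq]; norm_cast
      have hreal : feps x ≤ (1 - t) * rp + t * rq + ‖x - pt‖ ^ 2 / (2 * ε) := by
        exact_mod_cast hcomb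
      rw [hfx] at hreal
      have hxpt : x - pt = (x - p) - t • (q - p) := by
        rw [hpt]; module
      have hexp : ‖x - pt‖ ^ 2 = ‖x - p‖ ^ 2 - 2 * (t * inner ℝ (x - p) (q - p))
          + t ^ 2 * ‖q - p‖ ^ 2 := by
        rw [hxpt, norm_sub_sq_real, real_inner_smul_right, norm_smul, Real.norm_eq_abs,
          abs_of_pos ht]
        ring
      rw [hexp] at hreal
      have hsplit : (‖x - p‖ ^ 2 - 2 * (t * inner ℝ (x - p) (q - p)) + t ^ 2 * ‖q - p‖ ^ 2)
          / (2 * ε) = ‖x - p‖ ^ 2 / (2 * ε) - t * ((inner ℝ (x - p) (q - p) : ℝ) / ε)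
          + t * (t * (‖q - p‖ ^ 2 / (2 * ε))) := by
        field_simp
      rw [hsplit] at hreal
      have h2 : t * ((inner ℝ (x - p) (q - p) : ℝ) / ε) ≤
          t * (rq - rp + t * (‖q - p‖ ^ 2 / (2 * ε))) := by nlinarith [hreal]
      exact le_of_mul_le_mul_left h2 ht
    refine le_of_forall_pos_le_add ?_
    intro δ hδ
    set C := ‖q - p‖ ^ 2 / (2 * ε) with hC
    have hC0 : 0 ≤ C := by positivity
    have ht0 : 0 < min (1/2) (δ / (C + 1)) := by
      have : 0 < δ / (C + 1) := by positivity
      positivity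
    have ht1 : min (1/2) (δ / (C + 1)) < 1 :=
      lt_of_le_of_lt (min_le_left _ _) (by norm_num)
    have := step _ ht0 ht1
    have htC : min (1/2) (δ / (C + 1)) * C ≤ δ := by
      calc min (1/2) (δ / (C + 1)) * C ≤ (δ / (C + 1)) * C := by
            apply mul_le_mul_of_nonneg_right (min_le_right _ _) hC0
      _ ≤ (δ / (C + 1)) * (C + 1) := by
            apply mul_le_mul_of_nonneg_left (by linarith) (by positivity)
      _ = δ := by field_simp
    linarith
  -- firm nonexpansiveness
  have firm : ∀ x y : H, ‖prox x - prox y‖ ^ 2 ≤ (inner ℝ (x - y) (prox x - prox y) : ℝ) := by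
    intro x y
    obtain ⟨rp, hp, hfx⟩ := hfin x
    obtain ⟨rq, hq, hfy⟩ := hfin y
    have h1 := key x (prox y) rq rp hq hp hfx
    have h2 := key y (prox x) rp rq hp hq hfy
    have hadd : (inner ℝ (x - prox x) (prox y - prox x) : ℝ)
        + (inner ℝ (y - prox y) (prox x - prox y) : ℝ) ≤ 0 := by
      have h3 := add_le_add h1 h2
      rw [← add_div] at h3
      have h4 : ((inner ℝ (x - prox x) (prox y - prox x) : ℝ)
          + (inner ℝ (y - prox y) (prox x - prox y) : ℝ)) / ε ≤ 0 := by linarith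
      have h5 := mul_le_mul_of_nonneg_right h4 hε.le
      rw [div_mul_cancel₀ _ (ne_of_gt hε), zero_mul] at h5
      exact h5
    have hexpand : (inner ℝ (x - prox x) (prox y - prox x) : ℝ)
        + (inner ℝ (y - prox y) (prox x - prox y) : ℝ)
        = ‖prox x - prox y‖ ^ 2 - (inner ℝ (x - y) (prox x - prox y) : ℝ) := by
      simp only [norm_sub_sq_real, inner_sub_left, inner_sub_right,
        real_inner_self_eq_norm_sq]
      linarith [real_inner_comm x y, real_inner_comm x (prox x), real_inner_comm x (prox y),
        real_inner_comm y (prox x), real_inner_comm y (prox y),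
        real_inner_comm (prox x) (prox y)]
    linarith [hexpand ▸ hadd]
  -- Lipschitz bound
  have lip : ∀ x y : H, ‖ε⁻¹ • (x - prox x) - ε⁻¹ • (y - prox y)‖ ≤ ε⁻¹ * ‖x - y‖ := by
    intro x y
    have h1 : ε⁻¹ • (x - prox x) - ε⁻¹ • (y - prox y)
        = ε⁻¹ • ((x - y) - (prox x - prox y)) := by
      rw [← smul_sub]; congr 1; abel
    rw [h1, norm_smul, Real.norm_eq_abs, abs_of_pos (inv_pos.mpr hε)]
    have hsq : ‖(x - y) - (prox x - prox y)‖ ^ 2 ≤ ‖x - y‖ ^ 2 := by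
      rw [norm_sub_sq_real]
      nlinarith [firm x y, sq_nonneg ‖prox x - prox y‖]
    have hle : ‖(x - y) - (prox x - prox y)‖ ≤ ‖x - y‖ := by
      nlinarith [norm_nonneg ((x - y) - (prox x - prox y)), norm_nonneg (x - y)]
    exact mul_le_mul_of_nonneg_left hle (le_of_lt (inv_pos.mpr hε))
  -- one-sided quadratic upper bound
  have upper : ∀ x x' : H, feps x' - feps x ≤
      (inner ℝ (ε⁻¹ • (x - prox x)) (x' - x) : ℝ) + ‖x' - x‖ ^ 2 / (2 * ε) := by
    intro x x'
    obtain ⟨rp, hp, hfx⟩ := hfin x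
    have hlb' := hlb x' (prox x)
    rw [hp, ← EReal.coe_add] at hlb'
    have hre : feps x' ≤ rp + ‖x' - prox x‖ ^ 2 / (2 * ε) := by exact_mod_cast hlb'
    have hsplit : x' - prox x = (x - prox x) + (x' - x) := by abel
    have hexp : ‖x' - prox x‖ ^ 2 = ‖x - prox x‖ ^ 2
        + 2 * (inner ℝ (x - prox x) (x' - x) : ℝ) + ‖x' - x‖ ^ 2 := by
      rw [hsplit, norm_add_sq_real]
    rw [hexp] at hre
    have hi : (inner ℝ (ε⁻¹ • (x - prox x)) (x' - x) : ℝ)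
        = ε⁻¹ * (inner ℝ (x - prox x) (x' - x) : ℝ) := real_inner_smul_left _ _ _
    have hd : (‖x - prox x‖ ^ 2 + 2 * (inner ℝ (x - prox x) (x' - x) : ℝ) + ‖x' - x‖ ^ 2)
        / (2 * ε) = ‖x - prox x‖ ^ 2 / (2 * ε)
        + ε⁻¹ * (inner ℝ (x - prox x) (x' - x) : ℝ) + ‖x' - x‖ ^ 2 / (2 * ε) := by
      field_simp
    rw [hd] at hre
    rw [hi]
    linarith [hre, hfx]
  refine ⟨?_, lip⟩
  intro x
  rw [hasGradientAt_iff_isLittleO]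
  rw [Asymptotics.isLittleO_iff]
  intro c hc
  set C := ε⁻¹ + (2 * ε)⁻¹ with hCdef
  have hCpos : 0 < C := by positivity
  rw [Metric.eventually_nhds_iff]
  refine ⟨c / C, div_pos hc hCpos, ?_⟩
  intro x' hx'
  rw [dist_eq_norm] at hx'
  have hub := upper x x'
  have hlow : -( C * ‖x' - x‖ ^ 2) ≤ feps x' - feps x
      - (inner ℝ (ε⁻¹ • (x - prox x)) (x' - x) : ℝ) := by
    have h2 := upper x' x
    have hsym : ‖x - x'‖ = ‖x' - x‖ := norm_sub_rev _ _
    rw [hsym] at h2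
    -- h2 : feps x - feps x' ≤ ⟪g x', x - x'⟫ + ‖x'-x‖²/(2ε)
    have hi : (inner ℝ (ε⁻¹ • (x' - prox x')) (x - x') : ℝ)
        = -(inner ℝ (ε⁻¹ • (x' - prox x')) (x' - x) : ℝ) := by
      rw [← inner_neg_right]; congr 1; abel
    rw [hi] at h2
    have hdiff : (inner ℝ (ε⁻¹ • (x' - prox x') - ε⁻¹ • (x - prox x)) (x' - x) : ℝ)
        = (inner ℝ (ε⁻¹ • (x' - prox x')) (x' - x) : ℝ)
          - (inner ℝ (ε⁻¹ • (x - prox x)) (x' - x) : ℝ) := inner_sub_left _ _ _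
    have hcs : |(inner ℝ (ε⁻¹ • (x' - prox x') - ε⁻¹ • (x - prox x)) (x' - x) : ℝ)|
        ≤ ε⁻¹ * ‖x' - x‖ * ‖x' - x‖ := by
      refine le_trans (abs_real_inner_le_norm _ _) ?_
      apply mul_le_mul_of_nonneg_right (lip x' x) (norm_nonneg _)
    have habs := abs_le.mp hcs
    have : ‖x' - x‖ ^ 2 / (2 * ε) = (2 * ε)⁻¹ * ‖x' - x‖ ^ 2 := by ring
    nlinarith [h2, habs.1]
  have hb : |feps x' - feps x - (inner ℝ (ε⁻¹ • (x - prox x)) (x' - x) : ℝ)|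
      ≤ C * ‖x' - x‖ ^ 2 := by
    rw [abs_le]
    constructor
    · linarith
    · have : ‖x' - x‖ ^ 2 / (2 * ε) = (2 * ε)⁻¹ * ‖x' - x‖ ^ 2 := by ring
      have hCge : (2 * ε)⁻¹ * ‖x' - x‖ ^ 2 ≤ C * ‖x' - x‖ ^ 2 := by
        apply mul_le_mul_of_nonneg_right _ (sq_nonneg _)
        rw [hCdef]
        have : (0:ℝ) < ε⁻¹ := inv_pos.mpr hε
        linarith
      linarith [hub]
  calc ‖feps x' - feps x - (inner ℝ (ε⁻¹ • (x - prox x)) (x' - x) : ℝ)‖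
      ≤ C * ‖x' - x‖ ^ 2 := by rw [Real.norm_eq_abs]; exact hb
  _ = (C * ‖x' - x‖) * ‖x' - x‖ := by ring
  _ ≤ (C * (c / C)) * ‖x' - x‖ := by
        apply mul_le_mul_of_nonneg_right _ (norm_nonneg _)
        exact mul_le_mul_of_nonneg_left (le_of_lt hx') (le_of_lt hCpos)
  _ = c * ‖x' - x‖ := by field_simp
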